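/- arXiv:1601.07099 — 7 statements merged into one kernel-verified Lean document; each statement's English description precedes it below -/
import Mathlib

section
/- Assume Dickson's conjecture (D). Let f_i(x) = a_i·x + b_i for i < k and g_j(x) = c_j·x + d_j for j < k', all with integer coefficients and a_i, c_j ≥ 1. If the family (f_i) satisfies condition (⋆) and (a_i, b_i) ≠ (c_j, d_j) for all i, j, then there are infinitely many natural numbers m such that f_i(m) is prime for all i < k and g_j(m) is composite (not prime) for all j < k'. -/
/-- If an integer `z` is prime and `u ≥ 2` then `u * z` is not prime. -/
private lemma not_prime_mul_of_prime {u z : ℤ} (hu : 2 ≤ u) (hz : Prime z) :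
    ¬ Prime (u * z) := by
  rw [Int.prime_iff_natAbs_prime, Int.natAbs_mul]
  exact Nat.not_prime_mul (by omega) (Int.prime_iff_natAbs_prime.mp hz).ne_one

private lemma dickson_aux
    (hD : ∀ (k : ℕ) (a b : ℕ → ℤ), (∀ i < k, 1 ≤ a i) →
      (¬ ∃ n : ℤ, 1 < n ∧ ∀ s : ℤ, n ∣ ∏ i ∈ Finset.range k, (a i * s + b i)) →
      {m : ℕ | ∀ i < k, Prime (a i * m + b i)}.Infinite) :
    ∀ (k' k : ℕ) (a b c d : ℕ → ℤ),
      (∀ i < k, 1 ≤ a i) → (∀ j < k', 1 ≤ c j) →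
      (¬ ∃ n : ℤ, 1 < n ∧ ∀ s : ℤ, n ∣ ∏ i ∈ Finset.range k, (a i * s + b i)) →
      (∀ i < k, ∀ j < k', (a i, b i) ≠ (c j, d j)) →
      {m : ℕ | (∀ i < k, Prime (a i * m + b i)) ∧
        ∀ j < k', ¬ Prime (c j * m + d j)}.Infinite := by
  intro K
  induction K with
  | zero =>
    intro k a b c d ha hc hstar hne
    exact Set.Infinite.mono
      (fun m hm => ⟨hm, fun j hj => absurd hj (Nat.not_lt_zero j)⟩)
      (hD k a b ha hstar)
  | succ k' IH =>
    intro k a b c d ha hc hstar hne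
    have hc' : ∀ j < k', 1 ≤ c j := fun j hj => hc j (hj.trans (Nat.lt_succ_self k'))
    have hne' : ∀ i < k, ∀ j < k', (a i, b i) ≠ (c j, d j) :=
      fun i hi j hj => hne i hi j (hj.trans (Nat.lt_succ_self k'))
    by_cases hres : ∃ i < k, a i * d k' = b i * c k'
    · -- the last linear form is a multiple of one of the f_i
      obtain ⟨i, hik, hR⟩ := hres
      have ha1 : 1 ≤ a i := ha i hik
      have hc1 : 1 ≤ c k' := hc k' (Nat.lt_succ_self k')
      have hGpos : 0 < Int.gcd (a i) (c k') :=
        Int.gcd_pos_iff.mpr (Or.inl (by omega))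
      set G : ℤ := (Int.gcd (a i) (c k') : ℤ) with hGdef
      have hG1 : 1 ≤ G := by
        have : (0:ℤ) < G := by rw [hGdef]; exact_mod_cast hGpos
        omega
      have hG0 : G ≠ 0 := by omega
      set v : ℤ := a i / G with hvdef
      set u : ℤ := c k' / G with hudef
      have hva : G * v = a i := Int.mul_ediv_cancel' (Int.gcd_dvd_left _ _)
      have hcu : G * u = c k' := Int.mul_ediv_cancel' (Int.gcd_dvd_right _ _)
      have hcop : Int.gcd v u = 1 := Int.gcd_div_gcd_div_gcd hGpos
      have key : ∀ x : ℤ, v * (c k' * x + d k') = u * (a i * x + b i) := by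
        intro x
        apply mul_left_cancel₀ hG0
        rw [← mul_assoc, ← mul_assoc, hva, hcu]
        linear_combination hR
      have hv1 : 1 ≤ v := by nlinarith [hva, hG1, ha1]
      have hu1 : 1 ≤ u := by nlinarith [hcu, hG1, hc1]
      have hveq : v = 1 := by
        by_contra hv2
        apply hstar
        refine ⟨v, by omega, fun s => ?_⟩
        have hdvd : v ∣ a i * s + b i := by
          have h1 : v ∣ u * (a i * s + b i) := ⟨c k' * s + d k', (key s).symm⟩
          exact (Int.isCoprime_iff_gcd_eq_one.mpr hcop).dvd_of_dvd_mul_left h1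
        exact hdvd.trans (Finset.dvd_prod_of_mem _ (Finset.mem_range.mpr hik))
      have keyu : ∀ x : ℤ, c k' * x + d k' = u * (a i * x + b i) := by
        intro x
        have := key x
        rw [hveq, one_mul] at this
        exact this
      have hu2 : 2 ≤ u := by
        rcases (by omega : u = 1 ∨ 2 ≤ u) with h1 | h2
        · exfalso
          apply hne i hik k' (Nat.lt_succ_self k')
          have e0 := keyu 0
          have e1 := keyu 1
          rw [h1, one_mul] at e0 e1
          ring_nf at e0 e1
          have hca : a i = c k' := by linarith
          have hdb : b i = d k' := by linarith
          rw [hca, hdb]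
        · exact h2
      refine Set.Infinite.mono ?_ (IH k a b c d ha hc' hstar hne')
      rintro m ⟨h1, h2⟩
      refine ⟨h1, fun j hj => ?_⟩
      rcases Nat.lt_succ_iff_lt_or_eq.mp hj with hj' | rfl
      · exact h2 j hj'
      · rw [keyu (m : ℤ)]
        exact not_prime_mul_of_prime hu2 (h1 i hik)
    · -- all resultants are nonzero: force divisibility by a new prime
      push_neg at hres
      have hc1 : 1 ≤ c k' := hc k' (Nat.lt_succ_self k')
      set Bd : ℕ := (c k').natAbs ⊔ (Finset.range k).sup
          (fun i => (a i * d k' - b i * c k').natAbs) with hBd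
      obtain ⟨p, hpB, hp⟩ := Nat.exists_infinite_primes (Bd + 1)
      haveI : Fact p.Prime := ⟨hp⟩
      have hp2 : 2 ≤ p := hp.two_le
      have hcBd : (c k').natAbs < p := by
        have h1 : (c k').natAbs ≤ Bd := le_sup_left
        omega
      have hRBd : ∀ i < k, (a i * d k' - b i * c k').natAbs < p := by
        intro i hik
        have h1 : (a i * d k' - b i * c k').natAbs ≤
            (Finset.range k).sup (fun i => (a i * d k' - b i * c k').natAbs) :=
          Finset.le_sup (f := fun i => (a i * d k' - b i * c k').natAbs)
            (Finset.mem_range.mpr hik)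
        have h2 : (Finset.range k).sup (fun i => (a i * d k' - b i * c k').natAbs) ≤ Bd :=
          le_sup_right
        omega
      have hc0 : ((c k' : ℤ) : ZMod p) ≠ 0 := by
        intro h
        have hdvd : (p : ℤ) ∣ c k' := (ZMod.intCast_zmod_eq_zero_iff_dvd _ p).mp h
        have := Nat.le_of_dvd (by omega) (Int.natCast_dvd.mp hdvd)
        omega
      set z : ZMod p := (-(d k') : ℤ) * ((c k' : ℤ) : ZMod p)⁻¹ with hz
      set r : ℕ := z.val with hrdef
      have hrz : ((r : ℕ) : ZMod p) = z := ZMod.natCast_rightInverse z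
      have hgz : (((c k' * r + d k' : ℤ)) : ZMod p) = 0 := by
        push_cast
        rw [hrz, hz]
        push_cast
        field_simp
        ring
      have hpg : (p : ℤ) ∣ c k' * r + d k' := (ZMod.intCast_zmod_eq_zero_iff_dvd _ p).mp hgz
      have hfr : ∀ i < k, ¬ (p : ℤ) ∣ a i * r + b i := by
        intro i hik hdvd
        have h1 : (((a i * r + b i : ℤ)) : ZMod p) = 0 :=
          (ZMod.intCast_zmod_eq_zero_iff_dvd _ p).mpr hdvd
        have h2 : (((a i * d k' - b i * c k' : ℤ)) : ZMod p) = 0 := by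
          push_cast at h1 hgz ⊢
          rw [hrz] at h1 hgz
          linear_combination ((a i : ℤ) : ZMod p) * hgz - ((c k' : ℤ) : ZMod p) * h1
        have hdvd2 : (p : ℤ) ∣ a i * d k' - b i * c k' :=
          (ZMod.intCast_zmod_eq_zero_iff_dvd _ p).mp h2
        have hne0 : a i * d k' - b i * c k' ≠ 0 := sub_ne_zero.mpr (hres i hik)
        have := Nat.le_of_dvd (Int.natAbs_pos.mpr hne0) (Int.natCast_dvd.mp hdvd2)
        exact absurd this (by have := hRBd i hik; omega)
      -- the new families
      set A : ℕ → ℤ := fun i => a i * p with hA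
      set B : ℕ → ℤ := fun i => a i * r + b i with hB
      set C : ℕ → ℤ := fun j => c j * p with hC
      set D : ℕ → ℤ := fun j => c j * r + d j with hD2
      have ha' : ∀ i < k, 1 ≤ A i := by
        intro i hik
        have := ha i hik
        have : (1:ℤ) ≤ p := by exact_mod_cast Nat.one_le_of_lt hp2
        simp only [hA]
        nlinarith [ha i hik]
      have hc'' : ∀ j < k', 1 ≤ C j := by
        intro j hj
        have : (1:ℤ) ≤ p := by exact_mod_cast Nat.one_le_of_lt hp2
        simp only [hC]
        nlinarith [hc' j hj]
      have hne'' : ∀ i < k, ∀ j < k', (A i, B i) ≠ (C j, D j) := by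
        intro i hik j hj heq
        simp only [hA, hB, hC, hD2, Prod.mk.injEq] at heq
        obtain ⟨h1, h2⟩ := heq
        have hp0 : (p : ℤ) ≠ 0 := by positivity
        have hac : a i = c j := mul_right_cancel₀ hp0 h1
        have hbd : b i = d j := by
          rw [hac] at h2; linarith
        exact hne' i hik j hj (by rw [hac, hbd])
      have hstar' : ¬ ∃ n : ℤ, 1 < n ∧ ∀ s : ℤ,
          n ∣ ∏ i ∈ Finset.range k, (A i * s + B i) := by
        rintro ⟨n, hn1, hn⟩
        set q : ℕ := n.natAbs.minFac with hqdef
        have hnat : 1 < n.natAbs := by omega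
        have hqprime : q.Prime := Nat.minFac_prime (by omega)
        have hqn : (q : ℤ) ∣ n :=
          (Int.natCast_dvd_natCast.mpr (Nat.minFac_dvd _)).trans (Int.natAbs_dvd.mpr dvd_rfl)
        have hqall : ∀ t : ℤ,
            (q:ℤ) ∣ ∏ i ∈ Finset.range k, (a i * ((p:ℤ) * t + r) + b i) := by
          intro t
          have hEq : ∏ i ∈ Finset.range k, (A i * t + B i)
              = ∏ i ∈ Finset.range k, (a i * ((p:ℤ) * t + r) + b i) :=
            Finset.prod_congr rfl (fun i _ => by simp only [hA, hB]; ring)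
          have := hqn.trans (hn t)
          rwa [hEq] at this
        by_cases hqp : q = p
        · have h0 := hqall 0
          rw [hqp] at h0
          simp only [mul_zero, zero_add] at h0
          obtain ⟨i, hi, hdvd⟩ := (Nat.prime_iff_prime_int.mp hp).exists_mem_finset_dvd h0
          exact hfr i (Finset.mem_range.mp hi) hdvd
        · haveI : Fact q.Prime := ⟨hqprime⟩
          apply hstar
          refine ⟨(q:ℤ), by exact_mod_cast hqprime.one_lt, fun s => ?_⟩
          have hp0 : ((p:ℕ) : ZMod q) ≠ 0 := by
            intro h
            exact hqp ((Nat.prime_dvd_prime_iff_eq hqprime hp).mp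
              ((ZMod.natCast_eq_zero_iff p q).mp h))
          set t : ℕ := (((s - r : ℤ) : ZMod q) * ((p:ℕ) : ZMod q)⁻¹).val with htdef
          have htq : ((t:ℕ) : ZMod q) = ((s - r : ℤ) : ZMod q) * ((p:ℕ) : ZMod q)⁻¹ :=
            ZMod.natCast_rightInverse _
          have hts : (((p:ℤ) * t + r : ℤ) : ZMod q) = ((s : ℤ) : ZMod q) := by
            push_cast
            push_cast at htq
            rw [htq]
            field_simp
            ring
          have h := hqall t
          have hz0 : ((∏ i ∈ Finset.range k, (a i * ((p:ℤ) * t + r) + b i) : ℤ) : ZMod q) = 0 :=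
            (ZMod.intCast_zmod_eq_zero_iff_dvd _ q).mpr h
          have heq : ((∏ i ∈ Finset.range k, (a i * s + b i) : ℤ) : ZMod q)
              = ((∏ i ∈ Finset.range k, (a i * ((p:ℤ) * t + r) + b i) : ℤ) : ZMod q) := by
            rw [Int.cast_prod, Int.cast_prod]
            refine Finset.prod_congr rfl fun i _ => ?_
            push_cast
            push_cast at hts
            rw [hts]
          exact (ZMod.intCast_zmod_eq_zero_iff_dvd _ q).mp (heq.trans hz0)
      have Sinf := IH k A B C D ha' hc'' hstar' hne''
      set N : ℕ := p + (d k').natAbs with hN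
      have Sinf' := Sinf.diff (Set.finite_Iic N)
      have hinj : Set.InjOn (fun t : ℕ => p * t + r)
          ({t : ℕ | (∀ i < k, Prime (A i * t + B i)) ∧
            ∀ j < k', ¬ Prime (C j * t + D j)} \ Set.Iic N) := by
        intro t1 _ t2 _ h
        simp only at h
        have := Nat.add_right_cancel h
        exact Nat.eq_of_mul_eq_mul_left (by omega) this
      refine Set.Infinite.mono ?_ (Sinf'.image hinj)
      rintro m ⟨t, ⟨⟨h1, h2⟩, htN⟩, rfl⟩
      have htN' : N < t := by
        simpa using htN
      simp only [Set.mem_setOf_eq]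
      constructor
      · intro i hik
        have hpr := h1 i hik
        have heq : A i * t + B i = a i * ((p * t + r : ℕ) : ℤ) + b i := by
          simp only [hA, hB]; push_cast; ring
        rwa [heq] at hpr
      · intro j hj
        rcases Nat.lt_succ_iff_lt_or_eq.mp hj with hj' | rfl
        · have hpr := h2 j hj'
          have heq : C j * t + D j = c j * ((p * t + r : ℕ) : ℤ) + d j := by
            simp only [hC, hD2]; push_cast; ring
          rwa [heq] at hpr
        · intro hprime
          set zz : ℤ := c j * ((p * t + r : ℕ) : ℤ) + d j with hzz
          have hdvd : (p:ℤ) ∣ zz := by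
            have heq : zz = (p:ℤ) * (c j * t) + (c j * r + d j) := by
              simp only [hzz]; push_cast; ring
            rw [heq]
            exact dvd_add (Dvd.intro _ rfl) hpg
          have hgt : (p:ℤ) < zz := by
            have ht2 : ((p:ℤ) + |d j| + 1) ≤ (t:ℤ) := by
              have htc : ((N:ℕ):ℤ) < (t:ℤ) := by exact_mod_cast htN'
              have hNe : ((N:ℕ):ℤ) = (p:ℤ) + |d j| := by rw [hN]; push_cast; ring
              omega
            have hd1 : -|d j| ≤ d j := neg_abs_le _
            have hp2' : (2:ℤ) ≤ (p:ℤ) := by exact_mod_cast hp2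
            have hr0 : (0:ℤ) ≤ (r:ℕ) := by positivity
            have hzeq : zz = c j * ((p:ℤ) * t + r) + d j := by
              simp only [hzz]; push_cast; ring
            rw [hzeq]
            have hpt : (0:ℤ) ≤ (p:ℤ) * t + r := by positivity
            nlinarith [mul_nonneg (by linarith : (0:ℤ) ≤ c j - 1) hpt,
              mul_le_mul_of_nonneg_left ht2 (by linarith : (0:ℤ) ≤ (p:ℤ)),
              mul_nonneg (by linarith : (0:ℤ) ≤ (p:ℤ) - 1)
                (by positivity : (0:ℤ) ≤ |d j|)]
          obtain ⟨w, hw⟩ := hdvd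
          rcases hprime.irreducible.isUnit_or_isUnit hw with hu | hu
          · rcases Int.isUnit_iff.mp hu with h | h <;>
              [skip; skip] <;>
              · have hp2' : (2:ℤ) ≤ (p:ℤ) := by exact_mod_cast hp2
                omega
          · have hp2' : (2:ℤ) ≤ (p:ℤ) := by exact_mod_cast hp2
            rcases Int.isUnit_iff.mp hu with h | h <;> rw [h] at hw <;> omega

/-- Assuming Dickson's conjecture, one can simultaneously make the f_i prime and
the g_j non-prime for infinitely many natural numbers. -/
theorem dickson_prime_and_composite
    (hD : ∀ (k : ℕ) (a b : ℕ → ℤ), (∀ i < k, 1 ≤ a i) →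
      (¬ ∃ n : ℤ, 1 < n ∧ ∀ s : ℤ, n ∣ ∏ i ∈ Finset.range k, (a i * s + b i)) →
      {m : ℕ | ∀ i < k, Prime (a i * m + b i)}.Infinite)
    (k k' : ℕ) (a b c d : ℕ → ℤ)
    (ha : ∀ i < k, 1 ≤ a i) (hc : ∀ j < k', 1 ≤ c j)
    (hstar : ¬ ∃ n : ℤ, 1 < n ∧ ∀ s : ℤ, n ∣ ∏ i ∈ Finset.range k, (a i * s + b i))
    (hne : ∀ i < k, ∀ j < k', (a i, b i) ≠ (c j, d j)) :
    {m : ℕ | (∀ i < k, Prime (a i * m + b i)) ∧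
      ∀ j < k', ¬ Prime (c j * m + d j)}.Infinite := by
  exact dickson_aux hD k' k a b c d ha hc hstar hne
end

section
/- Assume Dickson's conjecture (D). Let b_0 < b_1 < ... < b_{n-1} be an increasing sequence of natural numbers such that there is no prime p for which the residues {b_i mod p : i < n} cover all of ℤ/pℤ. Then there are infinitely many natural numbers x such that x + b_0, ..., x + b_{n-1} are consecutive primes (i.e., each x + b_i is prime and no integer strictly between x + b_0 and x + b_{n-1} other than the x + b_i is prime). -/
/-- Assuming Dickson's conjecture, if b_0 < ... < b_{n-1} is a sequence of naturals whose
residues never cover all of ℤ/pℤ for any prime p, then there are infinitely many x such that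
x + b_0, ..., x + b_{n-1} are consecutive primes. -/
theorem consecutive_primes_pattern
    (hD : ∀ (k : ℕ) (a b : ℕ → ℤ), (∀ i < k, 1 ≤ a i) →
      (¬ ∃ n : ℤ, 1 < n ∧ ∀ s : ℤ, n ∣ ∏ i ∈ Finset.range k, (a i * s + b i)) →
      {m : ℕ | ∀ i < k, Prime (a i * m + b i)}.Infinite)
    (n : ℕ) (hn : 1 ≤ n) (b : ℕ → ℕ)
    (hmono : ∀ i j, i < j → j < n → b i < b j)
    (hres : ¬ ∃ p : ℕ, p.Prime ∧ ∀ r : ZMod p, ∃ i < n, (b i : ZMod p) = r) :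
    {x : ℕ | (∀ i < n, Nat.Prime (x + b i)) ∧
      ∀ y : ℕ, x + b 0 < y → y < x + b (n - 1) → Nat.Prime y →
        ∃ i < n, y = x + b i}.Infinite := by
  classical
  push_neg at hres
  -- hres : ∀ p, p.Prime → ∃ r : ZMod p, ∀ i < n, (b i : ZMod p) ≠ r
  set B := b (n - 1) with hBdef
  have hbB : ∀ i < n, b i ≤ B := by
    intro i hi
    rcases Nat.lt_or_ge i (n - 1) with h | h
    · exact (hmono i (n - 1) h (by omega)).le
    · have : i = n - 1 := by omega
      simp [this, hBdef]
  set G : Finset ℕ := (Finset.Ioo (b 0) B).filter (fun c => ∀ i < n, b i ≠ c) with hGdef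
  set p : ℕ → ℕ := fun c => Nat.nth Nat.Prime (B + c) with hpdef
  have hp : ∀ c, (p c).Prime := fun c =>
    Nat.nth_mem_of_infinite Nat.infinite_setOf_prime _
  have hple : ∀ c, B + c ≤ p c := fun c =>
    (Nat.nth_strictMono Nat.infinite_setOf_prime).le_apply
  have hpinj : ∀ c d, p c = p d → c = d := by
    intro c d h
    have := (Nat.nth_strictMono Nat.infinite_setOf_prime).injective h
    omega
  have hcop : Pairwise (Function.onFun Nat.Coprime fun c : {x // x ∈ G} => p (c : ℕ)) := by
    intro c d hcd
    exact (Nat.coprime_primes (hp _) (hp _)).mpr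
      (fun h => hcd (Subtype.ext (hpinj _ _ h)))
  set M : ℕ := ∏ c : {x // x ∈ G}, p (c : ℕ) with hMdef
  have hpdvdM : ∀ c ∈ G, p c ∣ M :=
    fun c hc => Finset.dvd_prod_of_mem _ (Finset.mem_univ (⟨c, hc⟩ : {x // x ∈ G}))
  have hM1 : 1 ≤ M := Finset.one_le_prod' fun c _ => (hp _).one_lt.le
  haveI : NeZero M := ⟨by omega⟩
  let e := ZMod.prodEquivPi (fun c : {x // x ∈ G} => p (c : ℕ)) hcop
  set z : ZMod M := e.symm (fun c => (-((c : ℕ) : ZMod (p (c : ℕ))))) with hz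
  set r : ℕ := z.val with hr
  have hrz : ((r : ℕ) : ZMod M) = z := by
    rw [hr, ZMod.natCast_val, ZMod.cast_id]
  have hcomp : ∀ c (hc : c ∈ G), ((r : ℕ) : ZMod (p c)) = -((c : ℕ) : ZMod (p c)) := by
    intro c hc
    let f : ZMod M →+* ZMod (p c) :=
      (Pi.evalRingHom (fun d : {x // x ∈ G} => ZMod (p (d : ℕ))) ⟨c, hc⟩).comp
        e.toRingHom
    have h1 : f ((r : ℕ) : ZMod M) = ((r : ℕ) : ZMod (p c)) := map_natCast f r
    rw [hrz] at h1
    have h2 : f z = -((c : ℕ) : ZMod (p c)) := by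
      show (e z) ⟨c, hc⟩ = _
      rw [hz, RingEquiv.apply_symm_apply]
    rw [← h1, h2]
  have hkey1 : ∀ c ∈ G, p c ∣ r + c := by
    intro c hc
    rw [← ZMod.natCast_eq_zero_iff, Nat.cast_add, hcomp c hc]
    ring
  have hkey2 : ∀ c ∈ G, ∀ i < n, ¬ p c ∣ (r + b i) := by
    intro c hc i hi hdvd
    have hcmem := Finset.mem_filter.mp hc
    have hcIoo := Finset.mem_Ioo.mp hcmem.1
    have h0 : ((r + b i : ℕ) : ZMod (p c)) = 0 :=
      (ZMod.natCast_eq_zero_iff _ _).mpr hdvd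
    rw [Nat.cast_add, hcomp c hc, neg_add_eq_zero] at h0
    have h1 : b i < p c := by have := hple c; have := hbB i hi; omega
    have h2 : c < p c := by have := hple c; omega
    have := congrArg ZMod.val h0.symm
    rw [ZMod.val_natCast_of_lt h1, ZMod.val_natCast_of_lt h2] at this
    exact hcmem.2 i hi this
  -- Apply Dickson's conjecture to the forms M * x + (r + b i)
  have hS : {m : ℕ | ∀ i < n, Prime ((M : ℤ) * m + ((r : ℤ) + (b i : ℤ)))}.Infinite := by
    refine hD n (fun _ => (M : ℤ)) (fun i => (r : ℤ) + (b i : ℤ)) (fun i _ => by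
      show (1 : ℤ) ≤ (M : ℤ); exact_mod_cast hM1) ?_
    rintro ⟨N, hN1, hNdvd⟩
    set q := N.natAbs.minFac with hq
    have hqprime : q.Prime := Nat.minFac_prime (by omega : N.natAbs ≠ 1)
    have hqdvdN : (q : ℤ) ∣ N :=
      dvd_trans (Int.natCast_dvd_natCast.mpr (Nat.minFac_dvd _)) (Int.natAbs_dvd.mpr dvd_rfl)
    have hqdvd : ∀ s : ℤ, (q : ℤ) ∣ ∏ i ∈ Finset.range n, ((M : ℤ) * s + ((r : ℤ) + (b i : ℤ))) :=
      fun s => hqdvdN.trans (hNdvd s)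
    by_cases hqM : q ∣ M
    · -- q is one of the primes p c; contradiction at s = 0
      obtain ⟨c, -, hqc⟩ := hqprime.prime.exists_mem_finset_dvd hqM
      have hqeq : q = p (c : ℕ) := (Nat.prime_dvd_prime_iff_eq hqprime (hp _)).mp hqc
      have h0 := hqdvd 0
      obtain ⟨i, hi, hdvd⟩ := (Nat.prime_iff_prime_int.mp hqprime).exists_mem_finset_dvd h0
      have hdvd' : (q : ℤ) ∣ ((r + b i : ℕ) : ℤ) := by
        have : (M : ℤ) * 0 + ((r : ℤ) + (b i : ℤ)) = ((r + b i : ℕ) : ℤ) := by push_cast; ring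
        rwa [this] at hdvd
      exact hkey2 (c : ℕ) c.2 i (Finset.mem_range.mp hi)
        (hqeq ▸ Int.natCast_dvd_natCast.mp hdvd')
    · -- q does not divide M; pick a good residue
      haveI : Fact q.Prime := ⟨hqprime⟩
      obtain ⟨t0, ht0⟩ := hres q hqprime
      have hM0 : (M : ZMod q) ≠ 0 := by
        rw [Ne, ZMod.natCast_eq_zero_iff]; exact hqM
      set s0 : ZMod q := (M : ZMod q)⁻¹ * (-t0 - (r : ZMod q)) with hs0
      have hqd := hqdvd (s0.val : ℤ)
      rw [← ZMod.intCast_zmod_eq_zero_iff_dvd] at hqd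
      push_cast at hqd
      rw [Finset.prod_eq_zero_iff] at hqd
      obtain ⟨i, hi, hzero⟩ := hqd
      have hcast : ((s0.val : ℕ) : ZMod q) = s0 := by
        rw [ZMod.natCast_val, ZMod.cast_id]
      rw [hcast] at hzero
      have : (M : ZMod q) * s0 + ((r : ZMod q) + (b i : ZMod q)) = (b i : ZMod q) - t0 := by
        rw [hs0, ← mul_assoc, mul_inv_cancel₀ hM0, one_mul]; ring
      rw [this] at hzero
      exact ht0 i (Finset.mem_range.mp hi) (sub_eq_zero.mp hzero)
  -- Transfer to the target set via x = M * m + r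
  have hinj : Set.InjOn (fun m : ℕ => M * m + r)
      ({m : ℕ | ∀ i < n, Prime ((M : ℤ) * m + ((r : ℤ) + (b i : ℤ)))} \ Set.Iio 2) := by
    intro m1 _ m2 _ h
    simp only at h
    exact Nat.eq_of_mul_eq_mul_left (by omega) (Nat.add_right_cancel h)
  refine Set.Infinite.mono ?_ (((hS.diff (Set.finite_Iio 2)).image hinj))
  rintro x ⟨m, ⟨hmS, hm2⟩, rfl⟩
  simp only [Set.mem_Iio, not_lt] at hm2
  simp only [Set.mem_setOf_eq]
  constructor
  · intro i hi
    rw [Nat.prime_iff_prime_int]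
    have hcast : ((M * m + r + b i : ℕ) : ℤ) = (M : ℤ) * m + ((r : ℤ) + (b i : ℤ)) := by
      push_cast; ring
    rw [hcast]
    exact hmS i hi
  · intro y hy1 hy2 hyp
    by_contra hcon
    push_neg at hcon
    have hxy : M * m + r < y := by
      have := (Nat.le_add_right (M * m + r) (b 0)); omega
    set c := y - (M * m + r) with hc
    have hyc : y = M * m + r + c := by omega
    have hc0 : b 0 < c := by omega
    have hcB : c < B := by omega
    have hcne : ∀ i < n, b i ≠ c := by
      intro i hi hbi
      exact hcon i hi (by omega)
    have hcG : c ∈ G := by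
      rw [hGdef]
      exact Finset.mem_filter.mpr ⟨Finset.mem_Ioo.mpr ⟨hc0, hcB⟩, hcne⟩
    have hdvdy : p c ∣ y := by
      rw [hyc, show M * m + r + c = M * m + (r + c) by ring]
      exact Nat.dvd_add (Dvd.dvd.mul_right (hpdvdM c hcG) m) (hkey1 c hcG)
    have hpeq : p c = y := (Nat.prime_dvd_prime_iff_eq (hp c) hyp).mp hdvdy
    have hMp : p c ≤ M := Nat.le_of_dvd (by omega) (hpdvdM c hcG)
    have h2 : 2 ≤ p c := (hp c).two_le
    have : 2 * M ≤ M * m := by nlinarith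
    omega
end

section
/- Let f_i(x) = a_i·x + b_i for i < k, with integer coefficients and a_i ≥ 1. If there are more than 2k integers m such that |f_i(m)| is prime for every i < k, then condition (⋆) holds: no integer n > 1 divides ∏_{i<k} f_i(s) for all integers s. -/
/-- If more than 2k integers m make all |a i * m + b i| prime, then condition (⋆) holds. -/
theorem many_prime_values_implies_star (k : ℕ) (a b : ℕ → ℤ) (ha : ∀ i < k, 1 ≤ a i)
    (h : ∃ S : Finset ℤ, 2 * k < S.card ∧
      ∀ m ∈ S, ∀ i < k, Nat.Prime (a i * m + b i).natAbs) :
    ¬ ∃ n : ℤ, 1 < n ∧ ∀ s : ℤ, n ∣ ∏ i ∈ Finset.range k, (a i * s + b i) := by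
  rintro ⟨n, hn, hdvd⟩
  obtain ⟨S, hcard, hS⟩ := h
  rcases Nat.eq_zero_or_pos k with hk | hk
  · subst hk
    simp only [Finset.range_zero, Finset.prod_empty] at hdvd
    have := Int.le_of_dvd one_pos (hdvd 0)
    omega
  obtain ⟨p, hp, hpn⟩ := Int.exists_prime_and_dvd (show n.natAbs ≠ 1 by omega)
  have key : ∀ m : ℤ, ∃ i, i < k ∧ (m ∈ S →
      (a i * m + b i = p ∨ a i * m + b i = -p)) := by
    intro m
    by_cases hm : m ∈ S
    · obtain ⟨i, hi, hpi⟩ := hp.exists_mem_finset_dvd (hpn.trans (hdvd m))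
      rw [Finset.mem_range] at hi
      refine ⟨i, hi, fun _ => ?_⟩
      have hq := hS m hm i hi
      have hd : p.natAbs ∣ (a i * m + b i).natAbs := Int.natAbs_dvd_natAbs.mpr hpi
      have hpp : p.natAbs.Prime := Int.prime_iff_natAbs_prime.mp hp
      have heq := (Nat.prime_dvd_prime_iff_eq hpp hq).mp hd
      have := Int.natAbs_eq_natAbs_iff.mp heq.symm
      tauto
    · exact ⟨0, hk, fun hm' => absurd hm' hm⟩
  choose g hg1 hg2 using key
  have hinj : Set.InjOn (fun m => (g m, a (g m) * m + b (g m))) S := by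
    intro m hm m' hm' heq
    simp only [Prod.mk.injEq] at heq
    obtain ⟨h1, h2⟩ := heq
    rw [h1] at h2
    have := ha (g m') (hg1 m')
    nlinarith [h2]
  have hmap : ∀ m ∈ S, (g m, a (g m) * m + b (g m)) ∈
      (Finset.range k) ×ˢ ({p, -p} : Finset ℤ) := by
    intro m hm
    rw [Finset.mem_product, Finset.mem_range, Finset.mem_insert, Finset.mem_singleton]
    exact ⟨hg1 m, hg2 m hm⟩
  have hle := Finset.card_le_card_of_injOn _ hmap hinj
  have hpne : p ≠ -p := by
    have := hp.ne_zero
    omega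
  rw [Finset.card_product, Finset.card_range, Finset.card_insert_of_notMem
    (by simp [hpne]), Finset.card_singleton] at hle
  omega
end

section
/- Assume Dickson's conjecture (D). For every n ∈ ℕ and every subset s ⊆ {0, 1, ..., n−1}, there exist natural numbers a ≥ 1 and b such that for all t < n, the number a·t + b is prime if and only if t ∈ s. -/
open Finset Nat

lemma crt_aux (n : ℕ) (F : Finset ℕ) :
    ∃ P C : ℕ, 0 < P ∧
      (∀ q : ℕ, q.Prime → q ∣ P → n < q ∧ ∃ t ∈ F, (q : ℤ) ∣ 1 + (n ! : ℤ) * (C + t)) ∧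
      (∀ t ∈ F, ∃ p : ℕ, p.Prime ∧ p ∣ P ∧ (p : ℤ) ∣ 1 + (n ! : ℤ) * (C + t)) := by
  classical
  induction F using Finset.induction with
  | empty =>
      exact ⟨1, 0, one_pos, fun q hq hq1 => absurd (Nat.eq_one_of_dvd_one hq1) hq.ne_one,
        fun t ht => absurd ht (by simp)⟩
  | @insert t₀ F ht₀ ih =>
      obtain ⟨P, C, hP, hPdiv, hFall⟩ := ih
      obtain ⟨p, hple, hp⟩ := Nat.exists_infinite_primes (max n P + 1)
      have hpn : n < p := lt_of_le_of_lt (le_max_left n P) hple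
      have hpP : ¬ p ∣ P := fun h =>
        absurd (Nat.le_of_dvd hP h) (by omega)
      have hcop : p.Coprime P := (hp.coprime_iff_not_dvd).mpr hpP
      -- solve n! * c ≡ -(1 + n! * t₀)  mod p
      have hfac : ((n ! : ZMod p)) ≠ 0 := by
        rw [Ne, ZMod.natCast_eq_zero_iff]
        exact fun h => absurd (hp.dvd_factorial.mp h) (by omega)
      haveI : Fact p.Prime := ⟨hp⟩
      set c₀ : ZMod p := (-(1 + (n ! : ZMod p) * (t₀ : ZMod p))) * (n ! : ZMod p)⁻¹ with hc₀
      obtain ⟨C', hC'P, hC'p⟩ := Nat.chineseRemainder hcop.symm C c₀.val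
      have key : (p : ℤ) ∣ 1 + (n ! : ℤ) * (C' + t₀) := by
        rw [← ZMod.intCast_zmod_eq_zero_iff_dvd]
        push_cast
        have hC'cast : ((C' : ZMod p)) = c₀ := by
          have := (ZMod.natCast_eq_natCast_iff _ _ _).mpr hC'p
          rwa [ZMod.natCast_val, ZMod.cast_id] at this
        rw [hC'cast, hc₀]
        field_simp
        ring
      refine ⟨p * P, C', Nat.mul_pos hp.pos hP, ?_, ?_⟩
      · intro q hq hqdvd
        rcases (Nat.Prime.dvd_mul hq).mp hqdvd with h | h
        · have hqp : q = p := (Nat.prime_dvd_prime_iff_eq hq hp).mp h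
          exact ⟨hqp ▸ hpn, t₀, Finset.mem_insert_self _ _, hqp ▸ key⟩
        · obtain ⟨hqn, t, htF, hdvd⟩ := hPdiv q hq h
          refine ⟨hqn, t, Finset.mem_insert_of_mem htF, ?_⟩
          -- transfer from C to C'
          have hmod : C' ≡ C [MOD q] := (hC'P.of_dvd h).symm.symm
          have hdC : (q : ℤ) ∣ (C : ℤ) - C' := Nat.ModEq.dvd hmod
          have : (1 + (n !) * (C' + t) : ℤ) = (1 + (n ! : ℤ) * (C + t)) - n ! * ((C : ℤ) - C') := by ring
          rw [this]
          exact dvd_sub hdvd (Dvd.dvd.mul_left hdC _)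
      · intro t ht
        rcases Finset.mem_insert.mp ht with rfl | htF
        · exact ⟨p, hp, Dvd.intro P rfl, key⟩
        · obtain ⟨p', hp', hp'P, hdvd⟩ := hFall t htF
          refine ⟨p', hp', hp'P.mul_left p, ?_⟩
          have hmod : C' ≡ C [MOD p'] := hC'P.of_dvd hp'P
          have hdC : (p' : ℤ) ∣ (C : ℤ) - C' := Nat.ModEq.dvd hmod
          have : (1 + (n !) * (C' + t) : ℤ) = (1 + (n ! : ℤ) * (C + t)) - n ! * ((C : ℤ) - C') := by ring
          rw [this]
          exact dvd_sub hdvd (Dvd.dvd.mul_left hdC _)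

/-- Assuming Dickson's conjecture, every prime pattern is realized along some
arithmetic progression of naturals. -/
theorem arithmetic_progressions_with_prescribed_prime_pattern
    (hD : ∀ (k : ℕ) (a b : ℕ → ℤ), (∀ i < k, 1 ≤ a i) →
      (¬ ∃ n : ℤ, 1 < n ∧ ∀ s : ℤ, n ∣ ∏ i ∈ Finset.range k, (a i * s + b i)) →
      {m : ℕ | ∀ i < k, Prime (a i * m + b i)}.Infinite) :
    ∀ (n : ℕ) (s : Finset ℕ), s ⊆ Finset.range n →
      ∃ a b : ℕ, 1 ≤ a ∧ ∀ t < n, (Nat.Prime (a * t + b) ↔ t ∈ s) := by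
  classical
  intro n s hs
  obtain ⟨P, C, hP, hPdiv, hFall⟩ := crt_aux n (Finset.range n \ s)
  set B : ℕ := 1 + n ! * C with hB
  set a' : ℕ := n ! * P with ha'
  have ha'pos : 0 < a' := Nat.mul_pos n.factorial_pos hP
  -- composite claim
  have hcomp : ∀ m : ℕ, 2 ≤ m → ∀ t < n, t ∉ s → ¬ Nat.Prime (n ! * t + (a' * m + B)) := by
    intro m hm t htn hts
    obtain ⟨p, hp, hpP, hdvd⟩ := hFall t (Finset.mem_sdiff.mpr ⟨Finset.mem_range.mpr htn, hts⟩)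
    intro hprime
    set v : ℕ := n ! * t + (a' * m + B) with hv
    have hpv : p ∣ v := by
      have h1 : (p : ℤ) ∣ (v : ℤ) := by
        have : (v : ℤ) = (1 + (n ! : ℤ) * (C + t)) + (n ! : ℤ) * P * m := by
          rw [hv, hB, ha']; push_cast; ring
        rw [this]
        exact dvd_add hdvd (Dvd.dvd.mul_right (Dvd.dvd.mul_left (Int.natCast_dvd_natCast.mpr hpP) _) _)
      exact_mod_cast h1
    have hplt : p < v := by
      have h1 : p ≤ P := Nat.le_of_dvd hP hpP
      have h2 : a' * m ≤ v := by
        rw [hv]; omega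
      have : 2 * P ≤ a' * m := by
        calc 2 * P ≤ m * P := Nat.mul_le_mul_right _ hm
        _ ≤ (n ! * m) * P :=
              Nat.mul_le_mul_right P (Nat.le_mul_of_pos_left m n.factorial_pos)
        _ = a' * m := by rw [ha']; ring
      have hp2 : 2 ≤ p := hp.two_le
      omega
    rcases (hprime.eq_one_or_self_of_dvd p hpv) with h | h
    · exact hp.ne_one h
    · omega
  rcases s.eq_empty_or_nonempty with rfl | ⟨e, he⟩
  · refine ⟨n !, a' * 2 + B, n.factorial_pos, fun t htn => ?_⟩
    simp only [Finset.notMem_empty, iff_false]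
    exact hcomp 2 le_rfl t htn (by simp)
  · have hen : e < n := Finset.mem_range.mp (hs he)
    set A : ℕ → ℤ := fun _ => (a' : ℤ) with hA
    set Bf : ℕ → ℤ := fun i => (B : ℤ) + (n ! : ℤ) * (if i ∈ s then i else e) with hBf
    have hstar : ¬ ∃ z : ℤ, 1 < z ∧ ∀ x : ℤ, z ∣ ∏ i ∈ Finset.range n, (A i * x + Bf i) := by
      rintro ⟨z, hz1, hz⟩
      set q : ℕ := z.natAbs.minFac with hqdef
      have hzabs : 1 < z.natAbs := by omega
      have hqprime : q.Prime := Nat.minFac_prime (by omega)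
      have hqz : (q : ℤ) ∣ z :=
        (Int.natCast_dvd_natCast.mpr (Nat.minFac_dvd _)).trans (Int.natAbs_dvd.mpr dvd_rfl)
      have hqprod : ∀ x : ℤ, (q : ℤ) ∣ ∏ i ∈ Finset.range n, (A i * x + Bf i) :=
        fun x => hqz.trans (hz x)
      have hqZ : Prime (q : ℤ) := Nat.prime_iff_prime_int.mp hqprime
      by_cases hqa : (q : ℤ) ∣ (a' : ℤ)
      · obtain ⟨i, hi, hdvd⟩ := hqZ.exists_mem_finset_dvd (hqprod 0)
        set t' : ℕ := if i ∈ s then i else e with ht'def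
        have ht's : t' ∈ s := by
          by_cases h : i ∈ s <;> simp [ht'def, h, he]
        have ht'n : t' < n := Finset.mem_range.mp (hs ht's)
        have hdvd' : (q : ℤ) ∣ (B : ℤ) + (n ! : ℤ) * t' := by
          by_cases h : i ∈ s <;> simpa [hA, hBf, ht'def, h, mul_comm] using hdvd
        have hqnat : q ∣ n ! * P := by
          rw [ha'] at hqa; exact_mod_cast hqa
        rcases hqprime.dvd_mul.mp hqnat with h | h
        · have h2 : (q : ℤ) ∣ (n ! : ℤ) * C + (n ! : ℤ) * t' := by
            have hq' : (q : ℤ) ∣ (n ! : ℤ) := Int.natCast_dvd_natCast.mpr h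
            exact dvd_add (hq'.mul_right _) (hq'.mul_right _)
          have h3 : (q : ℤ) ∣ 1 := by
            have heq : (1 : ℤ) = ((B : ℤ) + (n ! : ℤ) * t') - ((n ! : ℤ) * C + (n ! : ℤ) * t') := by
              rw [hB]; push_cast; ring
            rw [heq]; exact dvd_sub hdvd' h2
          have : q = 1 := by
            have := Int.eq_one_of_dvd_one (by positivity) h3
            exact_mod_cast this
          exact hqprime.ne_one this
        · obtain ⟨hqn, t, htF, hdvdt⟩ := hPdiv q hqprime h
          have hts : t ∉ s := (Finset.mem_sdiff.mp htF).2
          have htn : t < n := Finset.mem_range.mp (Finset.mem_sdiff.mp htF).1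
          have hd : (q : ℤ) ∣ (n ! : ℤ) * ((t' : ℤ) - t) := by
            have heq : (n ! : ℤ) * ((t' : ℤ) - t)
                = ((B : ℤ) + (n ! : ℤ) * t') - (1 + (n ! : ℤ) * (C + t)) := by
              rw [hB]; push_cast; ring
            rw [heq]; exact dvd_sub hdvd' hdvdt
          rcases hqZ.dvd_mul.mp hd with h' | h'
          · have : q ∣ n ! := by exact_mod_cast h'
            exact absurd (hqprime.dvd_factorial.mp this) (by omega)
          · have hd2 : q ∣ ((t' : ℤ) - t).natAbs := by
              have := Int.natAbs_dvd_natAbs.mpr h'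
              simpa using this
            have hne : t' ≠ t := fun h0 => hts (h0 ▸ ht's)
            have habs : ((t' : ℤ) - t).natAbs ≠ 0 ∧ ((t' : ℤ) - t).natAbs < n := by omega
            have := Nat.le_of_dvd (Nat.pos_of_ne_zero habs.1) hd2
            omega
      · have hqn : n < q := by
          by_contra h
          push_neg at h
          apply hqa
          rw [ha']
          exact_mod_cast (Nat.dvd_factorial hqprime.pos h).mul_right P
        have hchoice : ∀ x : ℕ, ∃ i, i ∈ Finset.range n ∧ (q : ℤ) ∣ (a' : ℤ) * x + Bf i := by
          intro x
          obtain ⟨i, hi, hd⟩ := hqZ.exists_mem_finset_dvd (hqprod x)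
          exact ⟨i, hi, by simpa [hA] using hd⟩
        choose g hg1 hg2 using hchoice
        obtain ⟨x₁, hx₁, x₂, hx₂, hne, heq⟩ :=
          Finset.exists_ne_map_eq_of_card_lt_of_maps_to
            (by simp : (Finset.range n).card < (Finset.range (n + 1)).card)
            (fun x _ => hg1 x)
        have hd : (q : ℤ) ∣ (a' : ℤ) * ((x₁ : ℤ) - x₂) := by
          have h1 := hg2 x₁
          have h2 := hg2 x₂
          rw [heq] at h1
          have heq2 : (a' : ℤ) * ((x₁ : ℤ) - x₂)
              = ((a' : ℤ) * x₁ + Bf (g x₂)) - ((a' : ℤ) * x₂ + Bf (g x₂)) := by ring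
          rw [heq2]; exact dvd_sub h1 h2
        rcases hqZ.dvd_mul.mp hd with h' | h'
        · exact hqa h'
        · have hd2 : q ∣ ((x₁ : ℤ) - x₂).natAbs := by
            have := Int.natAbs_dvd_natAbs.mpr h'
            simpa using this
          have hx₁' : x₁ < n + 1 := Finset.mem_range.mp hx₁
          have hx₂' : x₂ < n + 1 := Finset.mem_range.mp hx₂
          have habs : ((x₁ : ℤ) - x₂).natAbs ≠ 0 ∧ ((x₁ : ℤ) - x₂).natAbs ≤ n := by omega
          have := Nat.le_of_dvd (Nat.pos_of_ne_zero habs.1) hd2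
          omega
    have hinf := hD n A Bf (fun i _ => by
      simp only [hA]
      exact_mod_cast Nat.one_le_iff_ne_zero.mpr ha'pos.ne') hstar
    obtain ⟨m, hmS, hm2⟩ := hinf.exists_gt 1
    refine ⟨n !, a' * m + B, n.factorial_pos, fun t htn => ?_⟩
    constructor
    · intro hprime
      by_contra hts
      exact hcomp m hm2 t htn hts hprime
    · intro hts
      have := hmS t htn
      simp only [hA, hBf, if_pos hts] at this
      rw [Nat.prime_iff_prime_int]
      convert this using 1
      push_cast
      ring
end

section
/- Assume Dickson's conjecture (D). Let f_i(x) = a_i·x + b_i (i < k, integers a_i ≥ 1, b_i) satisfy condition (⋆), and let K be the product of all primes p < N where N = max({a_i : i < k} ∪ {k}) + 1. Then for every ℓ ∈ ℕ, the shifted family f'_i(x) = a_i·x + (a_i·ℓ·K + b_i) also satisfies condition (⋆). -/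
/-- Shifting the constant terms by multiples of a_i·K, where K is the product of the
primes below N, preserves condition (⋆). -/
theorem star_preserved_under_shift
    (hD : ∀ (k : ℕ) (a b : ℕ → ℤ), (∀ i < k, 1 ≤ a i) →
      (¬ ∃ n : ℤ, 1 < n ∧ ∀ s : ℤ, n ∣ ∏ i ∈ Finset.range k, (a i * s + b i)) →
      {m : ℕ | ∀ i < k, Prime (a i * m + b i)}.Infinite)
    (k : ℕ) (a b : ℕ → ℤ) (ha : ∀ i < k, 1 ≤ a i)
    (hstar : ¬ ∃ n : ℤ, 1 < n ∧ ∀ s : ℤ, n ∣ ∏ i ∈ Finset.range k, (a i * s + b i))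
    (N K : ℕ)
    (hN : N = (((Finset.range k).sup fun i => (a i).toNat) ⊔ k) + 1)
    (hK : K = ∏ p ∈ (Finset.range N).filter Nat.Prime, p) :
    ∀ ℓ : ℕ, ¬ ∃ n : ℤ, 1 < n ∧
      ∀ s : ℤ, n ∣ ∏ i ∈ Finset.range k, (a i * s + (a i * ℓ * K + b i)) := by
  intro ℓ ⟨n, hn, h⟩
  apply hstar
  refine ⟨n, hn, fun s => ?_⟩
  have := h (s - ℓ * K)
  have heq : ∏ i ∈ Finset.range k, (a i * (s - ℓ * K) + (a i * ℓ * K + b i))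
      = ∏ i ∈ Finset.range k, (a i * s + b i) := by
    apply Finset.prod_congr rfl
    intro i _
    ring
  rwa [heq] at this
end

section
/- Assume that for all n ∈ ℕ and all subsets s ⊆ {0,...,n−1} there is an arithmetic progression (a·t + b)_{t<n} of natural numbers with a·t + b prime iff t ∈ s. Then for every n and k, the relation φ(x, y_1, ..., y_n) := 'x + y_1 + ⋯ + y_n is prime' on ℤ has the n-independence property: there exist integers a_{i,j} (i < n, j < k) such that for every subset s ⊆ k^n there is b_s ∈ ℤ with (x + a_{0,j_0} + ⋯ + a_{n−1,j_{n−1}} prime at x = b_s) ⟺ (j_0, ..., j_{n−1}) ∈ s. -/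
/-- If every prime pattern occurs along an arithmetic progression, then the formula
"x + y₁ + ⋯ + yₙ is prime" has the n-independence property over ℤ. -/
theorem prime_sum_has_n_independence_property
    (hAP : ∀ (n : ℕ) (s : Finset ℕ), s ⊆ Finset.range n →
      ∃ a b : ℕ, 1 ≤ a ∧ ∀ t < n, (Nat.Prime (a * t + b) ↔ t ∈ s)) :
    ∀ (n k : ℕ), ∃ a : Fin n → Fin k → ℤ,
      ∀ s : Set (Fin n → Fin k), ∃ b : ℤ,
        ∀ j : Fin n → Fin k, (Prime (b + ∑ i : Fin n, a i (j i)) ↔ j ∈ s) := by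
  intro n k
  classical
  set T := Fin n → Fin k with hT
  set M := Fintype.card (Finset T) with hM
  let idx : Finset T ≃ Fin M := Fintype.equivFin _
  let e : T → ℕ := fun j => (finFunctionFinEquiv j : ℕ)
  have he_inj : Function.Injective e := fun x y h =>
    finFunctionFinEquiv.injective (Fin.val_injective h)
  set N := M * k ^ n with hN
  set S : Finset ℕ := (Finset.range N).filter
    (fun t => ∃ sf : Finset T, ∃ j : T, (idx sf : ℕ) * k ^ n + e j = t ∧ j ∈ sf) with hS
  obtain ⟨a, c, ha, hP⟩ := hAP N S (Finset.filter_subset _ _)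
  refine ⟨fun i j => (a : ℤ) * (j : ℕ) * (k : ℤ) ^ (i : ℕ), ?_⟩
  intro s
  refine ⟨(a : ℤ) * ((idx s.toFinset : ℕ) * k ^ n) + c, ?_⟩
  intro j
  have hkn : 0 < k ^ n := (finFunctionFinEquiv j).pos
  set t : ℕ := (idx s.toFinset : ℕ) * k ^ n + e j with htdef
  have hej : e j < k ^ n := (finFunctionFinEquiv j).isLt
  have ht : t < N := by
    have h2 : (idx s.toFinset : ℕ) < M := (idx s.toFinset).isLt
    calc t < (idx s.toFinset : ℕ) * k ^ n + k ^ n := by omega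
    _ = ((idx s.toFinset : ℕ) + 1) * k ^ n := by ring
    _ ≤ M * k ^ n := Nat.mul_le_mul_right _ (by omega)
  have hsum : (a : ℤ) * ((idx s.toFinset : ℕ) * k ^ n) + c
      + ∑ i : Fin n, (a : ℤ) * ((j i : ℕ) : ℤ) * (k : ℤ) ^ (i : ℕ)
      = ((a * t + c : ℕ) : ℤ) := by
    have he : (e j : ℤ) = ∑ i : Fin n, ((j i : ℕ) : ℤ) * (k : ℤ) ^ (i : ℕ) := by
      simp only [e, finFunctionFinEquiv_apply]
      push_cast
      ring
    push_cast [htdef, he]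
    simp only [mul_add, Finset.mul_sum, mul_assoc]
    ring
  rw [hsum, ← Nat.prime_iff_prime_int, hP t ht]
  -- now: t ∈ S ↔ j ∈ s
  have key : ∀ a1 a2 r1 r2 : ℕ, r1 < k ^ n → r2 < k ^ n →
      a1 * k ^ n + r1 = a2 * k ^ n + r2 → a1 = a2 ∧ r1 = r2 := by
    intro a1 a2 r1 r2 h1 h2 h
    have d1 : (a1 * k ^ n + r1) / k ^ n = a1 := by
      rw [mul_comm, Nat.mul_add_div hkn, Nat.div_eq_of_lt h1, Nat.add_zero]
    have d2 : (a2 * k ^ n + r2) / k ^ n = a2 := by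
      rw [mul_comm, Nat.mul_add_div hkn, Nat.div_eq_of_lt h2, Nat.add_zero]
    have : a1 = a2 := by rw [← d1, ← d2, h]
    subst this
    omega
  simp only [hS, Finset.mem_filter, Finset.mem_range]
  constructor
  · rintro ⟨-, sf, j', hval, hj'⟩
    obtain ⟨h1, h2⟩ := key _ _ _ _ (finFunctionFinEquiv j').isLt hej hval
    have hsf : sf = s.toFinset := idx.injective (Fin.val_injective h1)
    have hjj : j' = j := he_inj h2
    rw [← Set.mem_toFinset, ← hsf, ← hjj]
    exact hj'
  · intro hj
    exact ⟨ht, s.toFinset, j, rfl, Set.mem_toFinset.mpr hj⟩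
end

section
/- Assume: for all n and all s ⊆ {0,...,n−1} there exist a ≥ 1, b ∈ ℕ with (a·t + b prime ⟺ t ∈ s) for t < n. Then the formula 'x + y is prime' has the independence property over ℤ: for every k there exist integers a_0, ..., a_{k−1} such that for every subset s ⊆ {0,...,k−1} there exists b_s ∈ ℤ with (b_s + a_j prime ⟺ j ∈ s). -/
/-- If every prime pattern occurs along an arithmetic progression, then "x + y is prime"
has the independence property over ℤ. -/
theorem prime_sum_has_independence_property
    (hAP : ∀ (n : ℕ) (s : Finset ℕ), s ⊆ Finset.range n →
      ∃ a b : ℕ, 1 ≤ a ∧ ∀ t < n, (Nat.Prime (a * t + b) ↔ t ∈ s)) :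
    ∀ k : ℕ, ∃ a : Fin k → ℤ, ∀ s : Finset (Fin k), ∃ b : ℤ,
      ∀ j : Fin k, (Prime (b + a j) ↔ j ∈ s) := by
  intro k
  rcases Nat.eq_zero_or_pos k with hk | hk
  · subst hk
    exact ⟨fun j => 0, fun s => ⟨0, fun j => j.elim0⟩⟩
  -- enumerate subsets of `Fin k`
  obtain ⟨e⟩ : Nonempty (Finset (Fin k) ≃ Fin (2 ^ k)) :=
    ⟨Fintype.equivFinOfCardEq (by simp)⟩
  set n : ℕ := 2 ^ k * k with hn
  -- encoding map
  set f : Finset (Fin k) × Fin k → ℕ := fun p => k * (e p.1 : ℕ) + (p.2 : ℕ) with hf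
  have hfinj : ∀ p q : Finset (Fin k) × Fin k, f p = f q → p = q := by
    intro p q hpq
    have h1 : f p % k = (p.2 : ℕ) := by
      simp [hf, Nat.mul_add_mod, Nat.mod_eq_of_lt p.2.isLt]
    have h2 : f q % k = (q.2 : ℕ) := by
      simp [hf, Nat.mul_add_mod, Nat.mod_eq_of_lt q.2.isLt]
    have h3 : f p / k = (e p.1 : ℕ) := by
      rw [hf]; rw [Nat.mul_add_div hk, Nat.div_eq_of_lt p.2.isLt, Nat.add_zero]
    have h4 : f q / k = (e q.1 : ℕ) := by
      rw [hf]; rw [Nat.mul_add_div hk, Nat.div_eq_of_lt q.2.isLt, Nat.add_zero]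
    have hj : p.2 = q.2 := Fin.ext (by rw [← h1, ← h2, hpq])
    have hs : p.1 = q.1 := e.injective (Fin.ext (by rw [← h3, ← h4, hpq]))
    exact Prod.ext hs hj
  have hfn : ∀ p : Finset (Fin k) × Fin k, f p < n := by
    intro p
    have h1 : (e p.1 : ℕ) ≤ 2 ^ k - 1 := Nat.le_sub_one_of_lt (e p.1).isLt
    have h2 : (p.2 : ℕ) < k := p.2.isLt
    have : k * (e p.1 : ℕ) + (p.2 : ℕ) < k * (2 ^ k - 1) + k :=
      Nat.add_lt_add_of_le_of_lt (Nat.mul_le_mul_left k h1) h2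
    calc f p < k * (2 ^ k - 1) + k := this
      _ = k * (2 ^ k - 1 + 1) := by ring
      _ = 2 ^ k * k := by
          rw [Nat.sub_add_cancel (Nat.one_le_two_pow), Nat.mul_comm]
  -- the big pattern
  set S : Finset ℕ :=
    Finset.image f ((Finset.univ : Finset (Finset (Fin k) × Fin k)).filter
      (fun p => p.2 ∈ p.1)) with hSdef
  have hSsub : S ⊆ Finset.range n := by
    intro t ht
    rw [hSdef, Finset.mem_image] at ht
    obtain ⟨p, _, rfl⟩ := ht
    exact Finset.mem_range.mpr (hfn p)
  obtain ⟨A, B, hA, hprime⟩ := hAP n S hSsub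
  refine ⟨fun j => (A * (j : ℕ) : ℕ), fun s => ⟨((A * (k * (e s : ℕ)) + B : ℕ) : ℤ),
    fun j => ?_⟩⟩
  have hlt : f (s, j) < n := hfn (s, j)
  have hcast : ((A * (k * (e s : ℕ)) + B : ℕ) : ℤ) + ((A * (j : ℕ) : ℕ) : ℤ)
      = ((A * f (s, j) + B : ℕ) : ℤ) := by
    push_cast [hf]
    ring
  rw [hcast, ← Nat.prime_iff_prime_int, hprime _ hlt]
  constructor
  · intro hmem
    rw [hSdef, Finset.mem_image] at hmem
    obtain ⟨p, hp, hpf⟩ := hmem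
    rw [Finset.mem_filter] at hp
    have := hfinj p (s, j) hpf
    rw [this] at hp
    exact hp.2
  · intro hjs
    rw [hSdef, Finset.mem_image]
    exact ⟨(s, j), Finset.mem_filter.mpr ⟨Finset.mem_univ _, hjs⟩, rfl⟩
end
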